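/- arXiv:2511.18553 — 4 statements merged into one kernel-verified Lean document; each statement's English description precedes it below -/
import Mathlib

section
/- Let Z ∈ ℝ^{q×q} be symmetric positive semidefinite with rank p ≤ q, and let W ∈ ℝ^{q'×q} with q' ≥ q have rank q. Then the pseudo-determinant (product of non-zero eigenvalues) satisfies det*(W Z W^T) = det*(Z) · det((W U_p)^T (W U_p)), where U_p ∈ ℝ^{q×p} is the matrix whose columns are orthonormal eigenvectors of Z associated to its non-zero eigenvalues. -/
open Matrix Finset

/-- The pseudo-determinant of a real symmetric matrix: the product of its
non-zero eigenvalues (and `0` for non-symmetric matrices, by convention). -/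
noncomputable def pdet {n : Type*} [Fintype n] [DecidableEq n]
    (M : Matrix n n ℝ) : ℝ :=
  if h : M.IsHermitian then
    ∏ i ∈ Finset.univ.filter (fun i => h.eigenvalues i ≠ 0), h.eigenvalues i
  else 0

open Polynomial


lemma det_add_smul_one_eq_prod {n : ℕ} {M : Matrix (Fin n) (Fin n) ℝ}
    (hM : M.IsHermitian) (x : ℝ) :
    (M + x • 1).det = ∏ i, (hM.eigenvalues i + x) := by
  set V := (hM.eigenvectorUnitary : Matrix (Fin n) (Fin n) ℝ) with hV
  have h1 : V * star V = 1 := Matrix.mem_unitaryGroup_iff.mp hM.eigenvectorUnitary.2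
  have hof : (RCLike.ofReal ∘ hM.eigenvalues : Fin n → ℝ) = hM.eigenvalues := by
    ext i; simp
  have key : M + x • 1 =
      V * (diagonal hM.eigenvalues + x • 1) * star V := by
    rw [Matrix.mul_add, Matrix.add_mul]
    congr 1
    · rw [← hof]; exact hM.spectral_theorem
    · rw [Matrix.mul_smul, Matrix.smul_mul, Matrix.mul_one, h1]
  have hdiag : diagonal hM.eigenvalues + x • (1 : Matrix (Fin n) (Fin n) ℝ)
      = diagonal (fun i => hM.eigenvalues i + x) := by
    ext i j
    by_cases h : i = j <;> simp [h, diagonal_apply, Matrix.one_apply]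
  rw [key, det_mul, det_mul, mul_comm (det V), mul_assoc, ← det_mul, h1, det_one, mul_one,
    hdiag, det_diagonal]


noncomputable def ppoly {n : ℕ} (M : Matrix (Fin n) (Fin n) ℝ) : ℝ[X] :=
  (M.map Polynomial.C + (Polynomial.X : ℝ[X]) • 1).det

lemma eval_ppoly {n : ℕ} (M : Matrix (Fin n) (Fin n) ℝ) (x : ℝ) :
    (ppoly M).eval x = (M + x • 1).det := by
  unfold ppoly
  rw [← Polynomial.coe_evalRingHom, RingHom.map_det]
  congr 1
  ext i j
  by_cases h : i = j <;>
    simp [h, Matrix.map_apply, Matrix.add_apply, Matrix.smul_apply, Matrix.one_apply]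

lemma det_smul_one_add_mul_comm {m n : ℕ} (hnm : n ≤ m) (A : Matrix (Fin m) (Fin n) ℝ)
    (B : Matrix (Fin n) (Fin m) ℝ) {x : ℝ} (hx : x ≠ 0) :
    (A * B + x • 1).det = x ^ (m - n) * (B * A + x • 1).det := by
  have e1 : A * B + x • (1 : Matrix (Fin m) (Fin m) ℝ) = x • ((x⁻¹ • A) * B + 1) := by
    rw [smul_add, Matrix.smul_mul, smul_smul, mul_inv_cancel₀ hx, one_smul]
  have e2 : B * A + x • (1 : Matrix (Fin n) (Fin n) ℝ) = x • (B * (x⁻¹ • A) + 1) := by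
    rw [smul_add, Matrix.mul_smul, smul_smul, mul_inv_cancel₀ hx, one_smul]
  rw [e1, e2, det_smul, det_smul, det_mul_add_one_comm, Fintype.card_fin, Fintype.card_fin,
    ← mul_assoc, ← pow_add, Nat.sub_add_cancel hnm]

lemma pdet_eq_of {n m : ℕ} {M : Matrix (Fin n) (Fin n) ℝ} (hM : M.IsHermitian)
    {N : Matrix (Fin m) (Fin m) ℝ} (hN : N.det ≠ 0) {k : ℕ}
    (h : ∀ x : ℝ, x ≠ 0 → (M + x • 1).det = x ^ k * (N + x • 1).det) :
    (if h : M.IsHermitian then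
      ∏ i ∈ Finset.univ.filter (fun i => h.eigenvalues i ≠ 0), h.eigenvalues i
    else 0) = N.det := by
  classical
  rw [dif_pos hM]
  set lam := hM.eigenvalues with hlam
  set z := (Finset.univ.filter (fun i => lam i = 0)).card with hz
  set G := ∏ i ∈ Finset.univ.filter (fun i => lam i ≠ 0), (X + C (lam i)) with hG
  have hPM : ppoly M = X ^ z * G := by
    have h0 : ppoly M = ∏ i, (X + C (lam i)) := by
      apply Polynomial.funext
      intro x
      rw [eval_ppoly, det_add_smul_one_eq_prod hM]
      simp [eval_prod, add_comm]
      rfl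
    rw [h0, ← Finset.prod_filter_mul_prod_filter_not Finset.univ (fun i => lam i = 0)]
    congr 1
    rw [Finset.prod_congr rfl (fun i hi => ?_), Finset.prod_const, hz]
    rw [Finset.mem_filter] at hi
    rw [hi.2, map_zero, add_zero]
  have hG0 : G.eval 0 = ∏ i ∈ Finset.univ.filter (fun i => lam i ≠ 0), lam i := by
    simp [hG, eval_prod]
  have hG0ne : G.eval 0 ≠ 0 := by
    rw [hG0]
    exact Finset.prod_ne_zero_iff.mpr (fun i hi => (Finset.mem_filter.mp hi).2)
  have hQ0 : (ppoly N).eval 0 = N.det := by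
    rw [eval_ppoly]; simp
  have hQ0ne : (ppoly N).eval 0 ≠ 0 := by rw [hQ0]; exact hN
  have hPQ : ppoly M = X ^ k * ppoly N := by
    apply Polynomial.eq_of_infinite_eval_eq
    apply Set.Infinite.mono (s := {(0:ℝ)}ᶜ)
    · intro x hx
      have hx0 : x ≠ 0 := hx
      simp only [Set.mem_setOf_eq, eval_ppoly, eval_mul, eval_pow, eval_X]
      rw [h x hx0]
    · exact Set.Finite.infinite_compl (Set.finite_singleton 0)
  have hGne : G ≠ 0 := fun hc => hG0ne (by rw [hc]; simp)
  have hQne : ppoly N ≠ 0 := fun hc => hQ0ne (by rw [hc]; simp)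
  have hzk : z = k := by
    have := congrArg (rootMultiplicity 0) (hPM.symm.trans hPQ)
    rw [rootMultiplicity_mul (mul_ne_zero (pow_ne_zero _ X_ne_zero) hGne),
      rootMultiplicity_mul (mul_ne_zero (pow_ne_zero _ X_ne_zero) hQne),
      rootMultiplicity_eq_zero (fun hc => hG0ne hc),
      rootMultiplicity_eq_zero (fun hc => hQ0ne hc)] at this
    have hX : ∀ j : ℕ, rootMultiplicity (0:ℝ) (X ^ j) = j := by
      intro j
      have : (X : ℝ[X]) ^ j = (X - C 0) ^ j := by simp
      rw [this, rootMultiplicity_X_sub_C_pow]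
    rwa [hX, hX, add_zero, add_zero] at this
  have hGQ : G = ppoly N := by
    have := hPM.symm.trans hPQ
    rw [hzk] at this
    exact mul_left_cancel₀ (pow_ne_zero _ X_ne_zero) this
  have : G.eval 0 = N.det := by rw [hGQ, hQ0]
  rw [← hG0, this]

/-- Let `Z = U Λ Uᵀ` be symmetric PSD of rank `p ≤ q` (with `Λ` diagonal with
positive entries and `U` having orthonormal columns), and let `W ∈ ℝ^{q'×q}`
with `q' ≥ q` have rank `q`. Then
`det*(W Z Wᵀ) = det*(Z) · det((W U)ᵀ (W U))`. -/
theorem pdet_conj {q q' p : ℕ} (hq : q ≤ q') (hpq : p ≤ q)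
    (Z : Matrix (Fin q) (Fin q) ℝ) (hZ : Z.PosSemidef) (hrank : Z.rank = p)
    (Λ : Matrix (Fin p) (Fin p) ℝ)
    (hΛ : ∃ dvec : Fin p → ℝ, (∀ i, 0 < dvec i) ∧ Λ = Matrix.diagonal dvec)
    (U : Matrix (Fin q) (Fin p) ℝ) (hU : Uᵀ * U = 1)
    (hZdecomp : Z = U * Λ * Uᵀ)
    (W : Matrix (Fin q') (Fin q) ℝ) (hW : W.rank = q) :
    pdet (W * Z * Wᵀ) = pdet Z * ((W * U)ᵀ * (W * U)).det := by
  classical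
  obtain ⟨d, hd, hΛd⟩ := hΛ
  have hct : ∀ {a b : ℕ} (M : Matrix (Fin a) (Fin b) ℝ), Mᴴ = Mᵀ := by
    intro a b M; ext i j; simp [conjTranspose_apply]
  have hΛdet : Λ.det ≠ 0 := by
    rw [hΛd, det_diagonal]
    exact ne_of_gt (Finset.prod_pos (fun i _ => hd i))
  -- W is injective
  have hWker : LinearMap.ker W.mulVecLin = ⊥ := by
    have h1 := LinearMap.finrank_range_add_finrank_ker W.mulVecLin
    rw [Module.finrank_fintype_fun_eq_card, Fintype.card_fin] at h1
    have h2 : Matrix.rank W = Module.finrank ℝ (LinearMap.range W.mulVecLin) := rfl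
    rw [← h2, hW] at h1
    have h3 : Module.finrank ℝ (LinearMap.ker W.mulVecLin) = 0 := by omega
    exact Submodule.finrank_eq_zero.mp h3
  have hWinj : ∀ v : Fin q → ℝ, W *ᵥ v = 0 → v = 0 := by
    intro v hv
    have := LinearMap.ker_eq_bot.mp hWker
    exact this (by simpa [Matrix.mulVecLin_apply] using hv)
  set A := W * U with hA
  set S := Aᵀ * A with hS
  have hAinj : ∀ v : Fin p → ℝ, A *ᵥ v = 0 → v = 0 := by
    intro v hv
    have h1 : U *ᵥ v = 0 := by
      apply hWinj
      rwa [mulVec_mulVec]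
    calc v = (Uᵀ * U) *ᵥ v := by rw [hU, one_mulVec]
    _ = Uᵀ *ᵥ (U *ᵥ v) := by rw [mulVec_mulVec]
    _ = 0 := by rw [h1, mulVec_zero]
  have hSposdef : S.PosDef := by
    rw [posDef_iff_dotProduct_mulVec]
    constructor
    · have := isHermitian_conjTranspose_mul_self A
      rwa [hct A] at this
    · intro v hv
      have hAv : A *ᵥ v ≠ 0 := fun hc => hv (hAinj v hc)
      have e : star v ⬝ᵥ (S *ᵥ v) = (A *ᵥ v) ⬝ᵥ (A *ᵥ v) := by
        rw [star_trivial, hS, ← mulVec_mulVec, dotProduct_mulVec, vecMul_transpose]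
      rw [e]
      rcases lt_or_eq_of_le (Finset.sum_nonneg
        (fun i _ => mul_self_nonneg ((A *ᵥ v) i)) :
          (0:ℝ) ≤ (A *ᵥ v) ⬝ᵥ (A *ᵥ v)) with h | h
      · exact h
      · exact absurd (dotProduct_self_eq_zero.mp h.symm) hAv
  have hSdet : S.det ≠ 0 := ne_of_gt hSposdef.det_pos
  -- pdet Z = Λ.det
  have h1 : pdet Z = Λ.det := by
    refine pdet_eq_of hZ.1 hΛdet (k := q - p) ?_
    intro x hx
    rw [hZdecomp, Matrix.mul_assoc, det_smul_one_add_mul_comm hpq U (Λ * Uᵀ) hx,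
      Matrix.mul_assoc, hU, Matrix.mul_one]
  -- pdet (W Z Wᵀ) = (Λ * S).det
  have hHerm : (W * Z * Wᵀ).IsHermitian := by
    have := (hZ.mul_mul_conjTranspose_same W).1
    rwa [hct W] at this
  have h2 : pdet (W * Z * Wᵀ) = (Λ * S).det := by
    refine pdet_eq_of hHerm (by rw [det_mul]; exact mul_ne_zero hΛdet hSdet)
      (k := q' - p) ?_
    intro x hx
    have e : W * Z * Wᵀ = A * ((Λ * Uᵀ) * Wᵀ) := by
      rw [hZdecomp, hA]; simp only [Matrix.mul_assoc]
    have e2 : ((Λ * Uᵀ) * Wᵀ) * A = Λ * S := by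
      rw [hS, hA, transpose_mul]; simp only [Matrix.mul_assoc]
    rw [e, det_smul_one_add_mul_comm (hpq.trans hq) A ((Λ * Uᵀ) * Wᵀ) hx, e2]
  rw [h2, det_mul, h1]
end

section
/- Let A be a d×d real matrix and let i_1 > i_2 > ... > i_t ≥ 1 be natural numbers (t ≥ 2). For each k define P_{i_k} ∈ ℝ^{i_1 d × d} as the block matrix whose j-th d×d block (from the top, j = 1,...,i_1) equals A^{i_k − j} for j ≤ i_k and 0 for j > i_k, and let P = [P_{i_1} P_{i_2} ... P_{i_t}] ∈ ℝ^{i_1 d × t d}. Then det(P^T P) = (∏_{k=1}^{t−1} det(∑_{l=0}^{i_k − i_{k+1} − 1} (A^l)^T A^l)) · det(∑_{l=0}^{i_t − 1} (A^l)^T A^l). In particular det(P^T P) ≥ 1. -/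
open Matrix Finset

lemma one_le_det_one_add {n : Type*} [Fintype n] [DecidableEq n]
    {B : Matrix n n ℝ} (hB : B.PosSemidef) : 1 ≤ (1 + B).det := by
  set V : Matrix n n ℝ := ↑(hB.1.eigenvectorUnitary)
  have hVmem := (hB.1.eigenvectorUnitary).2
  have hVV : V * star V = 1 := (Matrix.mem_unitaryGroup_iff).1 hVmem
  have hspec := hB.1.spectral_theorem
  have key : 1 + B = V * (1 + diagonal (RCLike.ofReal ∘ hB.1.eigenvalues)) * star V := by
    rw [mul_add, add_mul, mul_one, hVV]
    exact congrArg (1 + ·) hspec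
  have hVV2 : star V * V = 1 := (Matrix.mem_unitaryGroup_iff').1 hVmem
  rw [key, det_mul, det_mul, mul_comm, ← mul_assoc, ← det_mul, hVV2, det_one, one_mul]
  have : (1 : Matrix n n ℝ) + diagonal (RCLike.ofReal ∘ hB.1.eigenvalues)
      = diagonal (fun i => 1 + hB.1.eigenvalues i) := by
    rw [← diagonal_one, diagonal_add]
    rfl
  rw [this, det_diagonal]
  calc (1:ℝ) = ∏ _i : n, 1 := by simp
    _ ≤ ∏ i : n, (1 + hB.1.eigenvalues i) :=
        Finset.prod_le_prod (fun i _ => by norm_num)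
          (fun i _ => by linarith [hB.eigenvalues_nonneg i])

lemma sum_ico_reflect {M : Type*} [AddCommMonoid M] (g : ℕ → M) (a b : ℕ) :
    ∑ j ∈ Finset.Ico a b, g (b - 1 - j) = ∑ l ∈ Finset.range (b - a), g l := by
  refine Finset.sum_nbij' (fun j => b - 1 - j) (fun l => b - 1 - l) ?_ ?_ ?_ ?_ ?_
  · intro j hj; simp only [Finset.mem_Ico] at hj; simp only [Finset.mem_range]; omega
  · intro l hl; simp only [Finset.mem_range] at hl; simp only [Finset.mem_Ico]; omega
  · intro j hj; simp only [Finset.mem_Ico] at hj; show b - 1 - (b - 1 - j) = j; omega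
  · intro l hl; simp only [Finset.mem_range] at hl; show b - 1 - (b - 1 - l) = l; omega
  · intro j hj; simp only [Finset.mem_Ico] at hj; congr 1

lemma psd_sum_pow {d : ℕ} (A : Matrix (Fin d) (Fin d) ℝ) (s : Finset ℕ) :
    (∑ l ∈ s, (A ^ l)ᵀ * A ^ l).PosSemidef := by
  classical
  refine Finset.sum_induction _ _ (fun a b ha hb => ha.add hb) ?_ ?_
  · exact Matrix.PosSemidef.zero
  · intro l _
    have := Matrix.posSemidef_conjTranspose_mul_self (A ^ l)
    rwa [conjTranspose_eq_transpose_of_trivial] at this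

lemma one_le_det_sum_pow {d m : ℕ} (A : Matrix (Fin d) (Fin d) ℝ) (hm : 1 ≤ m) :
    1 ≤ (∑ l ∈ Finset.range m, (A ^ l)ᵀ * A ^ l).det := by
  have hsplit : ∑ l ∈ Finset.range m, (A ^ l)ᵀ * A ^ l
      = 1 + ∑ l ∈ Finset.Ico 1 m, (A ^ l)ᵀ * A ^ l := by
    rw [Finset.range_eq_Ico, Finset.sum_eq_sum_Ico_succ_bot hm]
    simp
  rw [hsplit]
  exact one_le_det_one_add (psd_sum_pow A _)

/-- For `A ∈ ℝ^{d×d}` and indices `i_1 > i_2 > … > i_t ≥ 1` (`t ≥ 2`), the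
block matrix `P = [P_{i_1} … P_{i_t}]` (where `P_{i_k}` stacks
`A^{i_k−1},…,A,I_d` followed by zero blocks) satisfies
`det(PᵀP) = (∏_{k=1}^{t−1} det(∑_{l=0}^{i_k−i_{k+1}−1} (A^l)ᵀ A^l))
  · det(∑_{l=0}^{i_t−1} (A^l)ᵀ A^l)`, and in particular `det(PᵀP) ≥ 1`. -/
theorem det_PtP_formula {d t : ℕ} (ht : 2 ≤ t)
    (A : Matrix (Fin d) (Fin d) ℝ)
    (idx : Fin t → ℕ) (hanti : StrictAnti idx) (hpos : ∀ k, 1 ≤ idx k)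
    (n₁ : ℕ) (hn₁ : n₁ = idx ⟨0, by omega⟩)
    (P : Matrix (Fin n₁ × Fin d) (Fin t × Fin d) ℝ)
    (hP : ∀ (j : Fin n₁) (x : Fin d) (k : Fin t) (y : Fin d),
      P (j, x) (k, y) =
        if j.1 + 1 ≤ idx k then (A ^ (idx k - 1 - j.1)) x y else 0) :
    (Pᵀ * P).det =
      (∏ k : Fin (t - 1),
        (∑ l ∈ Finset.range
            (idx ⟨k.1, by have := k.2; omega⟩ - idx ⟨k.1 + 1, by have := k.2; omega⟩),
          (A ^ l)ᵀ * A ^ l).det)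
        * (∑ l ∈ Finset.range (idx ⟨t - 1, by omega⟩), (A ^ l)ᵀ * A ^ l).det
    ∧ 1 ≤ (Pᵀ * P).det := by
  classical
  -- lower bound of the support of column block k
  set lo : Fin t → ℕ := fun k => if h : k.1 + 1 < t then idx ⟨k.1 + 1, h⟩ else 0 with hlo
  -- the column-operation matrix
  set U : Matrix (Fin t × Fin d) (Fin t × Fin d) ℝ := fun p q =>
    if p.1 = q.1 then (if p.2 = q.2 then (1:ℝ) else 0)
    else if p.1.1 = q.1.1 + 1 then -(A ^ (idx q.1 - idx p.1)) p.2 q.2 else 0 with hU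
  -- the matrix after column operations
  set Q : Matrix (Fin n₁ × Fin d) (Fin t × Fin d) ℝ := fun p q =>
    if lo q.1 ≤ p.1.1 ∧ p.1.1 < idx q.1 then (A ^ (idx q.1 - 1 - p.1.1)) p.2 q.2 else 0
    with hQ
  set D : Fin t → Matrix (Fin d) (Fin d) ℝ :=
    fun k => ∑ l ∈ Finset.range (idx k - lo k), (A ^ l)ᵀ * A ^ l with hD
  have hmono : ∀ {a b : Fin t}, a ≤ b → idx b ≤ idx a := fun h => hanti.antitone h
  have hidx_le : ∀ k : Fin t, idx k ≤ n₁ := by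
    intro k
    rw [hn₁]
    exact hmono (Fin.mk_le_mk.mpr (Nat.zero_le _) : (⟨0, by omega⟩ : Fin t) ≤ k)
  have hlo_lt : ∀ k : Fin t, lo k < idx k := by
    intro k
    rw [hlo]
    by_cases h : k.1 + 1 < t
    · simp only [h, dif_pos]
      exact hanti (show k < ⟨k.1+1, h⟩ by simp [Fin.lt_def])
    · simp only [h, dif_neg, not_false_iff]
      exact hpos k
  have hPU : P * U = Q := by
    ext ⟨j, z⟩ ⟨k, y⟩
    rw [mul_apply, Fintype.sum_prod_type]
    have hdiag : (∑ w : Fin d, P (j, z) (k, w) * U (k, w) (k, y)) = P (j, z) (k, y) := by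
      have hu : ∀ w : Fin d, U (k, w) (k, y) = if w = y then (1:ℝ) else 0 := by
        intro w
        simp [hU]
      simp only [hu, mul_ite, mul_one, mul_zero]
      simp [Finset.sum_ite_eq']
    by_cases hk : (k : ℕ) + 1 < t
    · set k' : Fin t := ⟨(k : ℕ) + 1, hk⟩ with hk'
      have hne : k ≠ k' := by
        intro h
        have := congrArg Fin.val h
        simp [hk'] at this
      have hzero : ∀ k'' : Fin t, k'' ≠ k → k'' ≠ k' →
          (∑ w : Fin d, P (j, z) (k'', w) * U (k'', w) (k, y)) = 0 := by
        intro k'' h1 h2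
        refine Finset.sum_eq_zero fun w _ => ?_
        have hu : U (k'', w) (k, y) = 0 := by
          rw [hU]
          simp only
          rw [if_neg h1, if_neg]
          intro hcon
          exact h2 (Fin.ext hcon)
        rw [hu, mul_zero]
      have hsub : (∑ k'' ∈ ({k, k'} : Finset (Fin t)),
            ∑ w : Fin d, P (j, z) (k'', w) * U (k'', w) (k, y))
          = ∑ k'' : Fin t, ∑ w : Fin d, P (j, z) (k'', w) * U (k'', w) (k, y) := by
        refine Finset.sum_subset (Finset.subset_univ {k, k'}) fun k'' _ hk'' => ?_
        simp only [Finset.mem_insert, Finset.mem_singleton] at hk''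
        push_neg at hk''
        exact hzero k'' hk''.1 hk''.2
      rw [← hsub, Finset.sum_pair hne, hdiag]
      have hu2 : ∀ w : Fin d, U (k', w) (k, y) = -((A ^ (idx k - idx k')) w y) := by
        intro w
        rw [hU]
        simp only
        rw [if_neg (fun h => hne h.symm), if_pos]
        trivial
      have hklt : idx k' < idx k := hanti (by simp [Fin.lt_def, hk'])
      have hlok : lo k = idx k' := by
        rw [hlo]
        simp only
        rw [dif_pos hk]
      rw [hQ]
      simp only [hu2]
      rw [hlok]
      by_cases h1 : (j : ℕ) + 1 ≤ idx k'
      · rw [if_neg (by omega : ¬(idx k' ≤ (j : ℕ) ∧ (j : ℕ) < idx k))]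
        have e1 : P (j, z) (k, y) = (A ^ (idx k - 1 - (j : ℕ))) z y := by
          rw [hP, if_pos (by omega)]
        have e2 : (∑ w : Fin d, P (j, z) (k', w) * -((A ^ (idx k - idx k')) w y))
            = -((A ^ (idx k - 1 - (j : ℕ))) z y) := by
          have hp' : ∀ w : Fin d, P (j, z) (k', w) = (A ^ (idx k' - 1 - (j : ℕ))) z w :=
            fun w => by rw [hP, if_pos h1]
          simp only [hp', mul_neg]
          rw [Finset.sum_neg_distrib]
          congr 1
          rw [← Matrix.mul_apply, ← pow_add]
          have harith : idx k' - 1 - (j : ℕ) + (idx k - idx k') = idx k - 1 - (j : ℕ) := by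
            omega
          rw [harith]
        rw [e1, e2]
        exact add_neg_cancel _
      · by_cases h2 : (j : ℕ) + 1 ≤ idx k
        · rw [if_pos ⟨by omega, by omega⟩]
          have e2 : (∑ w : Fin d, P (j, z) (k', w) * -((A ^ (idx k - idx k')) w y)) = 0 :=
            Finset.sum_eq_zero fun w _ => by rw [hP, if_neg h1, zero_mul]
          rw [e2, add_zero, hP, if_pos h2]
        · rw [if_neg (by omega : ¬(idx k' ≤ (j : ℕ) ∧ (j : ℕ) < idx k))]
          have e2 : (∑ w : Fin d, P (j, z) (k', w) * -((A ^ (idx k - idx k')) w y)) = 0 :=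
            Finset.sum_eq_zero fun w _ => by rw [hP, if_neg h1, zero_mul]
          rw [e2, add_zero, hP, if_neg h2]
    · have hzero : ∀ k'' : Fin t, k'' ≠ k →
          (∑ w : Fin d, P (j, z) (k'', w) * U (k'', w) (k, y)) = 0 := by
        intro k'' h1
        refine Finset.sum_eq_zero fun w _ => ?_
        have hu : U (k'', w) (k, y) = 0 := by
          rw [hU]
          simp only
          rw [if_neg h1, if_neg]
          have := k''.2
          intro hcon
          omega
        rw [hu, mul_zero]
      rw [Finset.sum_eq_single k (fun b _ hb => hzero b hb)
        (fun h => absurd (Finset.mem_univ k) h), hdiag, hP, hQ]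
      simp only
      have hlok : lo k = 0 := by
        rw [hlo]
        simp only
        rw [dif_neg hk]
      rw [hlok]
      by_cases h2 : (j : ℕ) + 1 ≤ idx k
      · rw [if_pos h2, if_pos ⟨Nat.zero_le _, by omega⟩]
      · rw [if_neg h2, if_neg (by omega)]
  have hdetU : U.det = 1 := by
    have hBT : (Uᵀ).BlockTriangular Prod.fst := by
      intro p q h
      show U q p = 0
      rw [hU]
      simp only
      simp only [Fin.lt_def] at h
      rw [if_neg, if_neg]
      · show ¬((q.1 : ℕ) = (p.1 : ℕ) + 1)
        omega
      · intro hq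
        rw [hq] at h
        omega
    have h1 : Uᵀ.det = ∏ a : Fin t, ((Uᵀ).toSquareBlock Prod.fst a).det :=
      hBT.det_fintype
    have h2 : ∀ a : Fin t, (Uᵀ).toSquareBlock Prod.fst a = 1 := by
      intro a
      ext i j
      have hij : (Uᵀ.toSquareBlock Prod.fst a) i j = U j.1 i.1 := rfl
      rw [hij, hU, Matrix.one_apply]
      simp only
      by_cases hij2 : i = j
      · subst hij2
        rw [if_pos rfl, if_pos rfl, if_pos rfl]
      · rw [if_neg hij2, if_pos ((j.2).trans (i.2).symm)]
        rw [if_neg]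
        intro hcon
        exact hij2 (Subtype.ext (Prod.ext ((i.2).trans (j.2).symm) hcon.symm).symm).symm
    rw [← det_transpose, h1]
    simp [h2]
  have hdisj : ∀ k k' : Fin t, k < k' → idx k' ≤ lo k := by
    intro k k' hlt
    have hk : k.1 + 1 < t := by
      have := k'.2
      simp only [Fin.lt_def] at hlt
      omega
    rw [hlo]
    simp only
    rw [dif_pos hk]
    exact hmono (by simp only [Fin.le_def, Fin.lt_def] at hlt ⊢; omega)
  have hQtQ : Qᵀ * Q =
      (blockDiagonal D).submatrix (Equiv.prodComm (Fin t) (Fin d))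
        (Equiv.prodComm (Fin t) (Fin d)) := by
    ext ⟨k, x⟩ ⟨k', y⟩
    rw [mul_apply]
    have hRHS : (blockDiagonal D).submatrix (Equiv.prodComm (Fin t) (Fin d))
        (Equiv.prodComm (Fin t) (Fin d)) (k, x) (k', y)
        = if k = k' then D k x y else 0 := by
      simp [Matrix.blockDiagonal_apply]
    rw [hRHS]
    by_cases hkk : k = k'
    · subst hkk
      rw [if_pos rfl]
      have hterm : ∀ p : Fin n₁ × Fin d,
          Qᵀ (k, x) p * Q p (k, y)
          = if lo k ≤ (p.1 : ℕ) ∧ (p.1 : ℕ) < idx k then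
              (A ^ (idx k - 1 - (p.1 : ℕ))) p.2 x * (A ^ (idx k - 1 - (p.1 : ℕ))) p.2 y
            else 0 := by
        intro p
        rw [transpose_apply, hQ]
        simp only
        split <;> simp
      rw [Finset.sum_congr rfl fun p _ => hterm p]
      rw [Fintype.sum_prod_type]
      have hinner : ∀ j : Fin n₁,
          (∑ z : Fin d, if lo k ≤ (j : ℕ) ∧ (j : ℕ) < idx k then
              (A ^ (idx k - 1 - (j : ℕ))) z x * (A ^ (idx k - 1 - (j : ℕ))) z y
            else 0)
          = if lo k ≤ (j : ℕ) ∧ (j : ℕ) < idx k then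
              ((A ^ (idx k - 1 - (j : ℕ)))ᵀ * A ^ (idx k - 1 - (j : ℕ))) x y
            else 0 := by
        intro j
        split
        · rw [mul_apply]
          exact Finset.sum_congr rfl fun z _ => by rw [transpose_apply]
        · simp
      rw [Finset.sum_congr rfl fun j _ => hinner j]
      have hfin : ∀ g : ℕ → ℝ, (∑ j : Fin n₁, g (j : ℕ)) = ∑ j ∈ Finset.range n₁, g j :=
        fun g => Fin.sum_univ_eq_sum_range g n₁
      rw [hfin (fun j => if lo k ≤ j ∧ j < idx k then
          ((A ^ (idx k - 1 - j))ᵀ * A ^ (idx k - 1 - j)) x y else 0)]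
      rw [← Finset.sum_filter]
      have hset : (Finset.range n₁).filter (fun j => lo k ≤ j ∧ j < idx k)
          = Finset.Ico (lo k) (idx k) := by
        ext j
        simp only [Finset.mem_filter, Finset.mem_range, Finset.mem_Ico]
        have := hidx_le k
        constructor
        · rintro ⟨_, h2⟩; exact h2
        · rintro ⟨h1, h2⟩; exact ⟨by omega, h1, h2⟩
      rw [hset]
      rw [sum_ico_reflect (fun l => ((A ^ l)ᵀ * A ^ l) x y) (lo k) (idx k)]
      rw [hD]
      simp only
      rw [Matrix.sum_apply]
    · rw [if_neg hkk]
      refine Finset.sum_eq_zero fun p _ => ?_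
      rw [transpose_apply, hQ]
      simp only
      by_cases hc : lo k ≤ (p.1 : ℕ) ∧ (p.1 : ℕ) < idx k
      · have hnc : ¬(lo k' ≤ (p.1 : ℕ) ∧ (p.1 : ℕ) < idx k') := by
          rcases lt_or_gt_of_ne hkk with hlt | hlt
          · have h3 := hdisj k k' hlt
            have h4 := hc.1
            rintro ⟨h5, h6⟩
            omega
          · have h3 := hdisj k' k hlt
            have h4 := hc.2
            rintro ⟨h5, h6⟩
            omega
        rw [if_neg hnc, mul_zero]
      · rw [if_neg hc, zero_mul]
  have hdet : (Pᵀ * P).det = ∏ k : Fin t, (D k).det := by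
    have h1 : Qᵀ * Q = Uᵀ * (Pᵀ * P) * U := by
      rw [← hPU, transpose_mul]
      simp only [Matrix.mul_assoc]
    have h2 : (Qᵀ * Q).det = (Pᵀ * P).det := by
      rw [h1, det_mul, det_mul, det_transpose, hdetU]
      ring
    rw [← h2, hQtQ, det_submatrix_equiv_self, det_blockDiagonal]
  have hformula : (Pᵀ * P).det =
      (∏ k : Fin (t - 1),
        (∑ l ∈ Finset.range
            (idx ⟨k.1, by have := k.2; omega⟩ - idx ⟨k.1 + 1, by have := k.2; omega⟩),
          (A ^ l)ᵀ * A ^ l).det)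
        * (∑ l ∈ Finset.range (idx ⟨t - 1, by omega⟩), (A ^ l)ᵀ * A ^ l).det := by
    rw [hdet]
    obtain ⟨s, rfl⟩ : ∃ s, t = s + 1 := ⟨t - 1, by omega⟩
    rw [Fin.prod_univ_castSucc]
    congr 1
    · refine Finset.prod_congr rfl fun k _ => ?_
      have hk : (k : ℕ) + 1 < s + 1 := by omega
      have hcast : Fin.castSucc k = (⟨(k : ℕ), by omega⟩ : Fin (s + 1)) :=
        Fin.ext rfl
      have h2 : lo (⟨(k : ℕ), by omega⟩ : Fin (s + 1)) = idx ⟨(k : ℕ) + 1, hk⟩ := by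
        rw [hlo]
        exact dif_pos hk
      rw [hcast, hD]
      simp only
      rw [h2]
    · have hcast : (Fin.last s) = (⟨s + 1 - 1, by omega⟩ : Fin (s + 1)) :=
        Fin.ext (by simp)
      have h2 : lo (Fin.last s) = 0 := by
        rw [hlo]
        simp only
        rw [dif_neg (by simp)]
      rw [hD]
      simp only
      rw [h2, Nat.sub_zero, hcast]
  refine ⟨hformula, ?_⟩
  rw [hdet]
  calc (1:ℝ) = ∏ _k : Fin t, 1 := by simp
    _ ≤ ∏ k : Fin t, (D k).det := by
        refine Finset.prod_le_prod (fun i _ => by norm_num) (fun k _ => ?_)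
        exact one_le_det_sum_pow A (by have := hlo_lt k; omega)
end

section
/- Let A be a d×d real matrix with ‖A‖₂ < 1. For all natural numbers k with i_k ≥ 1, the diagonal Gram block P_{i_k}^T P_{i_k} = ∑_{j=0}^{i_k − 1} (A^j)^T A^j satisfies: its spectrum is contained in the interval [1 − δ(A), 1 + δ(A)] where δ(A) = ‖A‖₂²/(1 − ‖A‖₂²). -/
open Matrix Finset

/-- The spectral norm (operator norm induced by the Euclidean norm) of a real
square matrix. -/
noncomputable def specNorm {n : Type*} [Fintype n] [DecidableEq n]
    (M : Matrix n n ℝ) : ℝ :=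
  ‖Matrix.toEuclideanCLM (𝕜 := ℝ) M‖

/-- For `‖A‖₂ < 1` and `m ≥ 1`, the spectrum of the Gram block
`∑_{j=0}^{m−1} (A^j)ᵀ A^j` is contained in `[1 − δ(A), 1 + δ(A)]` where
`δ(A) = ‖A‖₂²/(1 − ‖A‖₂²)`. -/
theorem spectrum_gram_block {d : ℕ}
    (A : Matrix (Fin d) (Fin d) ℝ) (hA : specNorm A < 1)
    (m : ℕ) (hm : 1 ≤ m)
    (hG : (∑ j ∈ Finset.range m, (A ^ j)ᵀ * A ^ j).IsHermitian) :
    ∀ i, 1 - specNorm A ^ 2 / (1 - specNorm A ^ 2) ≤ hG.eigenvalues i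
        ∧ hG.eigenvalues i ≤ 1 + specNorm A ^ 2 / (1 - specNorm A ^ 2) := by
  intro i
  set a : ℝ := specNorm A with ha
  have ha0 : 0 ≤ a := norm_nonneg _
  have ha2 : a ^ 2 < 1 := by nlinarith
  have ha2' : (0:ℝ) < 1 - a ^ 2 := by linarith
  set T : EuclideanSpace ℝ (Fin d) →L[ℝ] EuclideanSpace ℝ (Fin d) :=
    Matrix.toEuclideanCLM (𝕜 := ℝ) A with hT
  set v : EuclideanSpace ℝ (Fin d) := hG.eigenvectorBasis i with hv
  have hvnorm : ‖v‖ = 1 := hG.eigenvectorBasis.orthonormal.1 i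
  -- eigenvector equation at the CLM level
  have heig : Matrix.toEuclideanCLM (𝕜 := ℝ)
      (∑ j ∈ Finset.range m, (A ^ j)ᵀ * A ^ j) v = hG.eigenvalues i • v := by
    apply (WithLp.equiv 2 (Fin d → ℝ)).injective
    rw [WithLp.equiv_apply, Matrix.ofLp_toEuclideanCLM]
    simpa [hv] using hG.mulVec_eigenvectorBasis i
  -- transpose is star over ℝ
  have hstar : ∀ j : ℕ, (A ^ j)ᵀ = star (A ^ j) := by
    intro j
    ext k l
    simp [Matrix.star_eq_conjTranspose, Matrix.conjTranspose_apply]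
  -- key identity: the eigenvalue is a sum of squared norms
  have hkey : hG.eigenvalues i = ∑ j ∈ Finset.range m, ‖(T ^ j) v‖ ^ 2 := by
    have h1 : hG.eigenvalues i
        = inner ℝ v (Matrix.toEuclideanCLM (𝕜 := ℝ)
            (∑ j ∈ Finset.range m, (A ^ j)ᵀ * A ^ j) v) := by
      rw [heig, real_inner_smul_right, real_inner_self_eq_norm_sq, hvnorm]
      ring
    rw [h1, map_sum, ContinuousLinearMap.sum_apply, inner_sum]
    refine Finset.sum_congr rfl fun j _ => ?_
    rw [hstar j, _root_.map_mul, map_star, map_pow, ← hT,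
      ContinuousLinearMap.mul_apply, ContinuousLinearMap.star_eq_adjoint,
      ContinuousLinearMap.adjoint_inner_right, real_inner_self_eq_norm_sq]
  constructor
  · -- lower bound
    have h1 : (1:ℝ) ≤ hG.eigenvalues i := by
      rw [hkey]
      have h0 : (0:ℕ) ∈ Finset.range m := Finset.mem_range.mpr hm
      have := Finset.single_le_sum
        (f := fun j => ‖(T ^ j) v‖ ^ 2)
        (fun j _ => sq_nonneg _) h0
      simpa [hvnorm] using this
    have hδ : 0 ≤ a ^ 2 / (1 - a ^ 2) := div_nonneg (sq_nonneg _) (le_of_lt ha2')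
    linarith
  · -- upper bound
    have hterm : ∀ j ∈ Finset.range m, ‖(T ^ j) v‖ ^ 2 ≤ (a ^ 2) ^ j := by
      intro j hj
      clear hj
      have hTa : ‖T‖ = a := rfl
      have h1 : ‖(T ^ j) v‖ ≤ a ^ j := by
        induction j with
        | zero => simp [hvnorm]
        | succ n ih =>
            calc ‖(T ^ (n + 1)) v‖ = ‖T ((T ^ n) v)‖ := by
                  rw [pow_succ']; rfl
              _ ≤ ‖T‖ * ‖(T ^ n) v‖ := T.le_opNorm _
              _ ≤ a * a ^ n := by
                  rw [hTa]
                  exact mul_le_mul_of_nonneg_left ih ha0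
              _ = a ^ (n + 1) := by ring
      calc ‖(T ^ j) v‖ ^ 2 ≤ (a ^ j) ^ 2 :=
            pow_le_pow_left₀ (norm_nonneg _) h1 2
        _ = (a ^ 2) ^ j := by ring
    have hsum : ∑ j ∈ Finset.range m, (a ^ 2) ^ j ≤ (1 - a ^ 2)⁻¹ := by
      have hsummable : Summable fun j : ℕ => (a ^ 2) ^ j :=
        summable_geometric_of_lt_one (sq_nonneg _) ha2
      calc ∑ j ∈ Finset.range m, (a ^ 2) ^ j
          ≤ ∑' j : ℕ, (a ^ 2) ^ j :=
            hsummable.sum_le_tsum _ (fun j _ => pow_nonneg (sq_nonneg _) j)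
        _ = (1 - a ^ 2)⁻¹ := tsum_geometric_of_lt_one (sq_nonneg _) ha2
    have heq : (1 - a ^ 2)⁻¹ = 1 + a ^ 2 / (1 - a ^ 2) := by
      field_simp
      ring
    calc hG.eigenvalues i = ∑ j ∈ Finset.range m, ‖(T ^ j) v‖ ^ 2 := hkey
      _ ≤ ∑ j ∈ Finset.range m, (a ^ 2) ^ j := Finset.sum_le_sum hterm
      _ ≤ (1 - a ^ 2)⁻¹ := hsum
      _ = 1 + a ^ 2 / (1 - a ^ 2) := heq
end

section
/- Let P ∈ ℝ^{q'×q} have rank q (with q' ≥ q) and let U ∈ ℝ^{q×p} have orthonormal columns (p ≤ q). Then det((PU)^T (PU)) ≥ det(P^T P) / ∏_{k=1}^{q−p} λ_k(P^T P), where λ_1 ≥ λ_2 ≥ ... are the eigenvalues of P^T P in decreasing order; equivalently det((PU)^T(PU)) ≥ ∏_{k=q−p+1}^{q} λ_k(P^T P). -/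
open Matrix Finset

private lemma sign_sq {p : ℕ} (σ : Equiv.Perm (Fin p)) :
    ((Equiv.Perm.sign σ : ℤ) : ℝ) * ((Equiv.Perm.sign σ : ℤ) : ℝ) = 1 := by
  rcases Int.units_eq_one_or (Equiv.Perm.sign σ) with h | h <;> simp [h]

private lemma cb_identity {p q : ℕ} (M : Matrix (Fin q) (Fin p) ℝ) :
    (p.factorial : ℝ) * (Mᵀ * M).det
      = ∑ f : Fin p → Fin q, ((M.submatrix f id).det) ^ 2 := by
  classical
  set ε : Equiv.Perm (Fin p) → ℝ := fun σ => ((Equiv.Perm.sign σ : ℤ) : ℝ) with hε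
  set S : Equiv.Perm (Fin p) → ℝ :=
    fun ρ => ∑ g : Fin p → Fin q, (∏ i, M (g i) i) * ∏ i, M (g (ρ i)) i with hS
  have hRHS : ∑ f : Fin p → Fin q, ((M.submatrix f id).det) ^ 2
      = (p.factorial : ℝ) * ∑ ρ, ε ρ * S ρ := by
    have hdet : ∀ f : Fin p → Fin q, (M.submatrix f id).det
        = ∑ σ, ε σ * ∏ i, M (f (σ i)) i := by
      intro f; rw [Matrix.det_apply']
      exact Finset.sum_congr rfl fun σ _ => by simp [Matrix.submatrix_apply, hε]
    calc ∑ f : Fin p → Fin q, ((M.submatrix f id).det) ^ 2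
        = ∑ f : Fin p → Fin q, ∑ σ, ∑ τ,
            (ε σ * ε τ) * ((∏ i, M (f (σ i)) i) * ∏ i, M (f (τ i)) i) := by
          refine Finset.sum_congr rfl fun f _ => ?_
          rw [hdet, sq, Finset.sum_mul_sum]
          exact Finset.sum_congr rfl fun σ _ =>
            Finset.sum_congr rfl fun τ _ => by ring
      _ = ∑ σ, ∑ τ, (ε σ * ε τ) *
            ∑ f : Fin p → Fin q, (∏ i, M (f (σ i)) i) * ∏ i, M (f (τ i)) i := by
          rw [Finset.sum_comm]
          refine Finset.sum_congr rfl fun σ _ => ?_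
          rw [Finset.sum_comm]
          exact Finset.sum_congr rfl fun τ _ => (Finset.mul_sum _ _ _).symm
      _ = ∑ σ, ∑ τ : Equiv.Perm (Fin p), (ε σ * ε τ) * S (σ⁻¹ * τ) := by
          refine Finset.sum_congr rfl fun σ _ => Finset.sum_congr rfl fun τ _ => ?_
          congr 1
          rw [hS]
          refine Fintype.sum_equiv (Equiv.arrowCongr σ⁻¹ (Equiv.refl (Fin q))) _ _ fun f => ?_
          simp only [Equiv.arrowCongr_apply, Equiv.refl_symm, Equiv.coe_refl,
            Function.comp_apply, Equiv.Perm.mul_apply, Equiv.symm_symm,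
            Equiv.Perm.inv_def, Equiv.apply_symm_apply, id_eq]
      _ = ∑ _σ : Equiv.Perm (Fin p), ∑ ρ, ε ρ * S ρ := by
          refine Finset.sum_congr rfl fun σ _ => ?_
          rw [← Equiv.sum_comp (Equiv.mulLeft σ) (fun τ => (ε σ * ε τ) * S (σ⁻¹ * τ))]
          refine Finset.sum_congr rfl fun ρ _ => ?_
          simp only [Equiv.coe_mulLeft, inv_mul_cancel_left]
          have : ε σ * ε (σ * ρ) = ε ρ := by
            simp only [hε, Equiv.Perm.sign_mul]
            push_cast
            rw [← mul_assoc, sign_sq, one_mul]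
          rw [this]
      _ = (p.factorial : ℝ) * ∑ ρ, ε ρ * S ρ := by
          rw [Finset.sum_const, Finset.card_univ, Fintype.card_perm, Fintype.card_fin,
            nsmul_eq_mul]
  have hLHS : (Mᵀ * M).det = ∑ ρ, ε ρ * S ρ := by
    rw [Matrix.det_apply']
    rw [← Equiv.sum_comp (Equiv.inv (Equiv.Perm (Fin p))) (fun ρ => ε ρ * S ρ)]
    refine Finset.sum_congr rfl fun ρ _ => ?_
    simp only [Equiv.inv_apply]
    have hsign : ε ρ⁻¹ = ε ρ := by simp [hε]
    rw [hsign]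
    congr 1
    have h1 : ∀ i, (Mᵀ * M) (ρ i) i = ∑ j, M j (ρ i) * M j i := by
      intro i; simp [Matrix.mul_apply]
    calc ∏ i, (Mᵀ * M) (ρ i) i = ∏ i, ∑ j, M j (ρ i) * M j i := by
          exact Finset.prod_congr rfl fun i _ => h1 i
      _ = ∑ g ∈ Fintype.piFinset (fun _ : Fin p => (univ : Finset (Fin q))),
            ∏ i, M (g i) (ρ i) * M (g i) i := Finset.prod_univ_sum _ _
      _ = ∑ g : Fin p → Fin q, ∏ i, M (g i) (ρ i) * M (g i) i := by
          rw [Fintype.piFinset_univ]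
      _ = S ρ⁻¹ := by
          rw [hS]
          refine Finset.sum_congr rfl fun g _ => ?_
          rw [Finset.prod_mul_distrib, mul_comm]
          congr 1
          rw [← Equiv.prod_comp ρ (fun i => M (g (ρ⁻¹ i)) i)]
          exact Finset.prod_congr rfl fun i _ => by simp
  rw [hRHS, hLHS]

private lemma strictMono_add_le {p q : ℕ} {m : Fin p → Fin q} (hm : StrictMono m) :
    ∀ t : ℕ, ∀ a : Fin p, ∀ h : a.1 + t < p, (m a).1 + t ≤ (m ⟨a.1 + t, h⟩).1 := by
  intro t
  induction t with
  | zero =>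
    intro a h
    have : (⟨a.1 + 0, h⟩ : Fin p) = a := Fin.ext (by simp only [Fin.val_mk, Nat.add_zero])
    simp [this]
  | succ n ih =>
    intro a h
    have h' : a.1 + n < p := by omega
    have h2 := ih a h'
    have h3 : (⟨a.1 + n, h'⟩ : Fin p) < ⟨a.1 + (n + 1), h⟩ := by
      rw [Fin.lt_def]; simp only [Fin.val_mk]; omega
    have h4 : m ⟨a.1 + n, h'⟩ < m ⟨a.1 + (n + 1), h⟩ := hm h3
    have h5 : (m ⟨a.1 + n, h'⟩).1 < (m ⟨a.1 + (n + 1), h⟩).1 := h4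
    have h6 : (⟨a.1 + (n + 1), h⟩ : Fin p) = ⟨(a.1 + n) + 1, by omega⟩ := Fin.ext (by simp only [Fin.val_mk]; omega)
    rw [h6] at h5
    omega

private lemma strictMono_le' {p q : ℕ} {m : Fin p → Fin q} (hm : StrictMono m)
    (j : Fin p) : (m j).1 ≤ q - p + j.1 := by
  have hp : 0 < p := j.pos
  have hlast : j.1 + (p - 1 - j.1) < p := by omega
  have h1 := strictMono_add_le hm (p - 1 - j.1) j hlast
  have h2 : ((m ⟨j.1 + (p - 1 - j.1), hlast⟩).1) < q := (m _).2
  omega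

private lemma prod_mu_le {p q : ℕ} (hpq : p ≤ q) (μ : Fin q → ℝ)
    (hmono : Antitone μ) (hpos : ∀ i, 0 < μ i) {f : Fin p → Fin q}
    (hf : Function.Injective f) :
    ∏ k ∈ Finset.univ.filter (fun k : Fin q => q - p ≤ k.1), μ k ≤ ∏ i, μ (f i) := by
  classical
  set Sf : Finset (Fin q) := Finset.univ.image f with hSf
  have hcard : Sf.card = p := by
    rw [hSf, Finset.card_image_of_injective _ hf, Finset.card_univ, Fintype.card_fin]
  have h1 : ∏ i, μ (f i) = ∏ k ∈ Sf, μ k :=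
    (Finset.prod_image (fun x _ y _ h => hf h)).symm
  set m : Fin p → Fin q := fun j => Sf.orderEmbOfFin hcard j with hm
  have h2 : ∏ k ∈ Sf, μ k = ∏ j : Fin p, μ (m j) := by
    refine (Finset.prod_nbij m (fun a _ => Finset.orderEmbOfFin_mem _ _ _)
      (fun a _ b _ hab => (Sf.orderEmbOfFin hcard).injective hab) ?_ (fun a _ => rfl)).symm
    intro k hk
    have : k ∈ Set.range m := by
      rw [hm]
      show k ∈ Set.range (Sf.orderEmbOfFin hcard)
      rw [Finset.range_orderEmbOfFin]
      exact hk
    obtain ⟨j, hj⟩ := this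
    exact ⟨j, by simp, hj⟩
  have hb : ∀ j : Fin p, (m j).1 ≤ q - p + j.1 := fun j =>
    strictMono_le' (Sf.orderEmbOfFin hcard).strictMono j
  have hqp : ∀ j : Fin p, q - p + j.1 < q := fun j => by have := j.2; omega
  have h3 : ∏ k ∈ Finset.univ.filter (fun k : Fin q => q - p ≤ k.1), μ k
      = ∏ j : Fin p, μ ⟨q - p + j.1, hqp j⟩ := by
    refine (Finset.prod_nbij (fun j : Fin p => (⟨q - p + j.1, hqp j⟩ : Fin q))
      (fun a _ => by simp only [Finset.mem_filter, Finset.mem_univ, true_and]; omega)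
      (fun a _ b _ hab => ?_) ?_ (fun a _ => rfl)).symm
    · have h := congrArg Fin.val hab
      simp only at h
      exact Fin.ext (by omega)
    · intro k hk
      simp only [Finset.coe_filter, Set.mem_setOf_eq] at hk
      have hk2 := k.2
      refine ⟨⟨k.1 - (q - p), by omega⟩, by simp, ?_⟩
      show (⟨q - p + ((⟨k.1 - (q - p), by omega⟩ : Fin p)).1, _⟩ : Fin q) = k
      exact Fin.ext (by simp only [Fin.val_mk]; omega)
  rw [h1, h2, h3]
  refine Finset.prod_le_prod (fun j _ => (hpos _).le) fun j _ => ?_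
  exact hmono (by rw [Fin.le_def]; exact hb j)

/-- Let `P ∈ ℝ^{q'×q}` have rank `q` (`q' ≥ q`) and `U ∈ ℝ^{q×p}` have
orthonormal columns (`p ≤ q`). If `μ` enumerates the eigenvalues of `PᵀP` in
decreasing order, then `det((PU)ᵀ(PU)) ≥ det(PᵀP) / ∏_{k=1}^{q−p} μ_k`;
equivalently `det((PU)ᵀ(PU)) ≥ ∏_{k=q−p+1}^{q} μ_k`. -/
theorem det_PU_ge {q q' p : ℕ} (hq : q ≤ q') (hpq : p ≤ q)
    (P : Matrix (Fin q') (Fin q) ℝ) (hP : P.rank = q)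
    (U : Matrix (Fin q) (Fin p) ℝ) (hU : Uᵀ * U = 1)
    (hH : (Pᵀ * P).IsHermitian)
    (μ : Fin q → ℝ) (hmono : Antitone μ)
    (hperm : ∃ σ : Equiv.Perm (Fin q), ∀ i, μ i = hH.eigenvalues (σ i)) :
    ((P * U)ᵀ * (P * U)).det
        ≥ (Pᵀ * P).det / ∏ k ∈ Finset.univ.filter (fun k : Fin q => k.1 < q - p), μ k
    ∧ ((P * U)ᵀ * (P * U)).det
        ≥ ∏ k ∈ Finset.univ.filter (fun k : Fin q => q - p ≤ k.1), μ k := by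
  classical
  obtain ⟨σ, hσ⟩ := hperm
  set d : Fin q → ℝ := hH.eigenvalues with hd
  -- eigenvalues are positive
  have hPSD : (Pᵀ * P).PosSemidef := by
    have := Matrix.posSemidef_conjTranspose_mul_self P
    rwa [Matrix.conjTranspose_eq_transpose_of_trivial] at this
  have hdnn : ∀ i, 0 ≤ d i := fun i => hPSD.eigenvalues_nonneg i
  have hrank : (Pᵀ * P).rank = q := by rw [Matrix.rank_transpose_mul_self, hP]
  have hdne : ∀ i, d i ≠ 0 := by
    intro i hi
    have hcard : Fintype.card {j // hH.eigenvalues j ≠ 0} = q := by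
      rw [← hH.rank_eq_card_non_zero_eigs, hrank]
    have hlt : Fintype.card {j // hH.eigenvalues j ≠ 0} < Fintype.card (Fin q) :=
      Fintype.card_subtype_lt (x := i) (by simpa using hi)
    rw [hcard, Fintype.card_fin] at hlt
    exact lt_irrefl _ hlt
  have hdpos : ∀ i, 0 < d i := fun i => lt_of_le_of_ne (hdnn i) (Ne.symm (hdne i))
  have hμpos : ∀ i, 0 < μ i := fun i => by rw [hσ]; exact hdpos _
  -- spectral decomposition
  set Q : Matrix (Fin q) (Fin q) ℝ := (hH.eigenvectorUnitary : Matrix (Fin q) (Fin q) ℝ)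
    with hQdef
  have hspec : Pᵀ * P = Q * Matrix.diagonal d * Qᵀ := by
    have h := hH.spectral_theorem
    rw [Unitary.conjStarAlgAut_apply, Matrix.star_eq_conjTranspose, Matrix.conjTranspose_eq_transpose_of_trivial] at h
    have hco : (RCLike.ofReal ∘ hH.eigenvalues : Fin q → ℝ) = d := by
      funext i
      simp [RCLike.ofReal_real_eq_id, hd]
    rw [hco] at h
    exact h
  have hQQ : Q * Qᵀ = 1 := by
    have h := Matrix.mem_unitaryGroup_iff.mp hH.eigenvectorUnitary.2
    rwa [Matrix.star_eq_conjTranspose, Matrix.conjTranspose_eq_transpose_of_trivial] at h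
  set V : Matrix (Fin q) (Fin p) ℝ := Qᵀ * U with hVdef
  have hVV : Vᵀ * V = 1 := by
    rw [hVdef, Matrix.transpose_mul, Matrix.transpose_transpose, Matrix.mul_assoc,
      ← Matrix.mul_assoc Q Qᵀ U, hQQ, Matrix.one_mul, hU]
  set e : Fin q → ℝ := fun i => Real.sqrt (d i) with he
  set E : Matrix (Fin q) (Fin q) ℝ := Matrix.diagonal e with hE
  have hEE : E * E = Matrix.diagonal d := by
    rw [hE, Matrix.diagonal_mul_diagonal]
    have : (fun i => e i * e i) = d := funext fun i => Real.mul_self_sqrt (hdnn i)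
    rw [this]
  have hmat : (P * U)ᵀ * (P * U) = (E * V)ᵀ * (E * V) := by
    rw [Matrix.transpose_mul, Matrix.transpose_mul, hE, Matrix.diagonal_transpose, ← hE]
    calc Uᵀ * Pᵀ * (P * U) = Uᵀ * (Pᵀ * P) * U := by
          simp only [Matrix.mul_assoc]
      _ = Uᵀ * (Q * Matrix.diagonal d * Qᵀ) * U := by rw [hspec]
      _ = Vᵀ * E * (E * V) := by
          rw [hVdef, Matrix.transpose_mul, Matrix.transpose_transpose, ← hEE]
          simp only [Matrix.mul_assoc]
  -- the key bound
  set c : ℝ := ∏ k ∈ Finset.univ.filter (fun k : Fin q => q - p ≤ k.1), μ k with hc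
  have hcpos : 0 < c := Finset.prod_pos fun k _ => hμpos k
  have key2 : c ≤ ((P * U)ᵀ * (P * U)).det := by
    have h1 := cb_identity (E * V)
    have h2 := cb_identity V
    rw [hVV, Matrix.det_one, mul_one] at h2
    have hterm : ∀ f : Fin p → Fin q,
        c * ((V.submatrix f id).det) ^ 2 ≤ (((E * V).submatrix f id).det) ^ 2 := by
      intro f
      have hsubeq : (E * V).submatrix f id
          = Matrix.diagonal (fun i => e (f i)) * (V.submatrix f id) := by
        ext i j
        simp [hE, Matrix.mul_apply, Matrix.submatrix_apply, Matrix.diagonal,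
          Finset.mul_sum]
      have hsub : ((E * V).submatrix f id).det
          = (∏ i, e (f i)) * (V.submatrix f id).det := by
        rw [hsubeq, Matrix.det_mul, Matrix.det_diagonal]
      rw [hsub, mul_pow]
      have he2 : (∏ i, e (f i)) ^ 2 = ∏ i, d (f i) := by
        rw [← Finset.prod_pow]
        exact Finset.prod_congr rfl fun i _ => Real.sq_sqrt (hdnn _)
      rw [he2]
      by_cases hz : (V.submatrix f id).det = 0
      · rw [hz]; simp
      · have hinj : Function.Injective f := by
          by_contra hni
          rw [Function.not_injective_iff] at hni
          obtain ⟨a, b, hab, hne⟩ := hni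
          exact hz (Matrix.det_zero_of_row_eq hne
            (by funext j; simp [Matrix.submatrix_apply, hab]))
        have hinj2 : Function.Injective (fun i => σ⁻¹ (f i)) :=
          (Equiv.injective σ⁻¹).comp hinj
        have hle := prod_mu_le hpq μ hmono hμpos hinj2
        have heq : ∏ i, μ (σ⁻¹ (f i)) = ∏ i, d (f i) := by
          refine Finset.prod_congr rfl fun i _ => ?_
          rw [hσ]; simp
        refine mul_le_mul_of_nonneg_right ?_ (sq_nonneg _)
        rw [← heq]; exact hle
    have hsum : (p.factorial : ℝ) * c ≤ (p.factorial : ℝ) * ((P * U)ᵀ * (P * U)).det := by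
      calc (p.factorial : ℝ) * c = c * (p.factorial : ℝ) := by ring
        _ = c * ∑ f : Fin p → Fin q, ((V.submatrix f id).det) ^ 2 := by rw [← h2]
        _ = ∑ f : Fin p → Fin q, c * ((V.submatrix f id).det) ^ 2 := by
            rw [Finset.mul_sum]
        _ ≤ ∑ f : Fin p → Fin q, (((E * V).submatrix f id).det) ^ 2 :=
            Finset.sum_le_sum fun f _ => hterm f
        _ = (p.factorial : ℝ) * ((E * V)ᵀ * (E * V)).det := h1.symm
        _ = (p.factorial : ℝ) * ((P * U)ᵀ * (P * U)).det := by rw [hmat]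
    have hfac : (0 : ℝ) < p.factorial := by
      exact_mod_cast p.factorial_pos
    exact le_of_mul_le_mul_left hsum hfac
  -- part 1 reduces to part 2
  have hlowpos : 0 < ∏ k ∈ Finset.univ.filter (fun k : Fin q => k.1 < q - p), μ k :=
    Finset.prod_pos fun k _ => hμpos k
  have hdetA : (Pᵀ * P).det = ∏ i, μ i := by
    rw [hH.det_eq_prod_eigenvalues]
    simp only [RCLike.ofReal_real_eq_id, id_eq]
    rw [← Equiv.prod_comp σ d]
    refine Finset.prod_congr rfl fun i _ => ?_
    rw [hσ]
  have hsplit : (Pᵀ * P).det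
      = (∏ k ∈ Finset.univ.filter (fun k : Fin q => k.1 < q - p), μ k) * c := by
    have hfe : Finset.univ.filter (fun k : Fin q => ¬ k.1 < q - p)
        = Finset.univ.filter (fun k : Fin q => q - p ≤ k.1) :=
      Finset.filter_congr fun k _ => by simp [not_lt]
    rw [hdetA, hc, ← Finset.prod_filter_mul_prod_filter_not Finset.univ
      (fun k : Fin q => k.1 < q - p) μ, hfe]
  have hdiv : (Pᵀ * P).det
      / ∏ k ∈ Finset.univ.filter (fun k : Fin q => k.1 < q - p), μ k = c := by
    rw [hsplit, mul_div_cancel_left₀ _ (ne_of_gt hlowpos)]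
  exact ⟨by rw [ge_iff_le, hdiv]; exact key2, key2⟩
end
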